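/- arXiv:1301.5679 — 3 statements merged into one kernel-verified Lean document; each statement's English description precedes it below -/
import Mathlib

section
/- Let f : D → ℝ³ be a weakly-regular C^{1M} ps-front with associated weakly harmonic map N : D → S². Then ∂_y⟨f_x, f_x⟩ = 0 and ∂_x⟨f_y, f_y⟩ = 0 on D; that is, ⟨f_x,f_x⟩ is a function of x alone and ⟨f_y,f_y⟩ is a function of y alone. -/
noncomputable section

open Real Set

abbrev E3 : Type := EuclideanSpace ℝ (Fin 3)

/-- Partial derivative in the `x`-direction. -/
noncomputable def pdx {E : Type*} [NormedAddCommGroup E] [NormedSpace ℝ E]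
    (f : ℝ × ℝ → E) (p : ℝ × ℝ) : E := lineDeriv ℝ f p ((1 : ℝ), (0 : ℝ))

/-- Partial derivative in the `y`-direction. -/
noncomputable def pdy {E : Type*} [NormedAddCommGroup E] [NormedSpace ℝ E]
    (f : ℝ × ℝ → E) (p : ℝ × ℝ) : E := lineDeriv ℝ f p ((0 : ℝ), (1 : ℝ))

/-- `f` is C¹ on `D`, and the mixed second partials `∂y∂x f` and `∂x∂y f`
exist at every point of `D`, are continuous on `D`, and agree on `D`. -/
def C1M {E : Type*} [NormedAddCommGroup E] [NormedSpace ℝ E]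
    (D : Set (ℝ × ℝ)) (f : ℝ × ℝ → E) : Prop :=
  ContDiffOn ℝ 1 f D ∧
  (∀ p ∈ D, LineDifferentiableAt ℝ (pdx f) p ((0 : ℝ), (1 : ℝ))) ∧
  (∀ p ∈ D, LineDifferentiableAt ℝ (pdy f) p ((1 : ℝ), (0 : ℝ))) ∧
  ContinuousOn (pdy (pdx f)) D ∧
  ContinuousOn (pdx (pdy f)) D ∧
  (∀ p ∈ D, pdy (pdx f) p = pdx (pdy f) p)

/-- The cross product on ℝ³. -/
noncomputable def cross3 (a b : E3) : E3 :=
  (WithLp.equiv 2 (Fin 3 → ℝ)).symm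
    ![a 1 * b 2 - a 2 * b 1, a 2 * b 0 - a 0 * b 2, a 0 * b 1 - a 1 * b 0]

/-- The Euclidean inner product on ℝ³. -/
noncomputable def dot (a b : E3) : ℝ := inner ℝ a b

/-- `N : D → S²` is weakly harmonic: it is C^{1M}, weakly regular, takes values in the
unit sphere, and `N_xy = N_yx = h • N` for some scalar function `h`. -/
def WeakHarmonic (D : Set (ℝ × ℝ)) (N : ℝ × ℝ → E3) : Prop :=
  C1M D N ∧ (∀ p ∈ D, ‖N p‖ = 1) ∧
  (∀ p ∈ D, pdx N p ≠ 0 ∧ pdy N p ≠ 0) ∧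
  ∃ h : ℝ × ℝ → ℝ, ∀ p ∈ D, pdy (pdx N) p = h p • N p ∧ pdx (pdy N) p = h p • N p

/-- A weakly-regular C^{1M} ps-front with associated weakly harmonic map `N`. -/
def PsFront (D : Set (ℝ × ℝ)) (f N : ℝ × ℝ → E3) : Prop :=
  C1M D f ∧ (∀ p ∈ D, pdx f p ≠ 0 ∧ pdy f p ≠ 0) ∧
  WeakHarmonic D N ∧
  ∀ p ∈ D, pdx f p = cross3 (N p) (pdx N p) ∧ pdy f p = -cross3 (N p) (pdy N p)


/-! ### Auxiliary lemmas -/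

lemma dot_expand (a b : E3) : dot a b = a 0 * b 0 + (a 1 * b 1 + a 2 * b 2) := by
  simp [dot, PiLp.inner_apply, Fin.sum_univ_three, RCLike.inner_apply]
  ring

lemma dot_cross3_self (a b : E3) :
    dot (cross3 a b) (cross3 a b) =
      (a 1 * b 2 - a 2 * b 1) * (a 1 * b 2 - a 2 * b 1) +
      ((a 2 * b 0 - a 0 * b 2) * (a 2 * b 0 - a 0 * b 2) +
       (a 0 * b 1 - a 1 * b 0) * (a 0 * b 1 - a 1 * b 0)) := by
  rw [dot_expand]
  simp [cross3]

lemma comp_coord {g : ℝ → E3} {g' : E3} {t : ℝ} (h : HasDerivAt g g' t) (i : Fin 3) :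
    HasDerivAt (fun s => g s i) (g' i) t := by
  have := (EuclideanSpace.proj (𝕜 := ℝ) i).hasFDerivAt.comp_hasDerivAt t h
  simp at this; exact this

/-- Scalar computation: the derivative of `‖n × b‖²` along a curve vanishes,
given the orthogonality relations and that `b' = H • a`. -/
lemma key_deriv {n0 n1 n2 b0 b1 b2 : ℝ → ℝ} {A0 A1 A2 B0 B1 B2 C0 C1 C2 H : ℝ}
    (hn0 : HasDerivAt n0 C0 0) (hn1 : HasDerivAt n1 C1 0) (hn2 : HasDerivAt n2 C2 0)
    (hb0 : HasDerivAt b0 (H * A0) 0) (hb1 : HasDerivAt b1 (H * A1) 0)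
    (hb2 : HasDerivAt b2 (H * A2) 0)
    (e0 : n0 0 = A0) (e1 : n1 0 = A1) (e2 : n2 0 = A2)
    (g0 : b0 0 = B0) (g1 : b1 0 = B1) (g2 : b2 0 = B2)
    (oAB : A0 * B0 + (A1 * B1 + A2 * B2) = 0) (oAC : A0 * C0 + (A1 * C1 + A2 * C2) = 0) :
    HasDerivAt (fun t =>
      (n1 t * b2 t - n2 t * b1 t) * (n1 t * b2 t - n2 t * b1 t) +
      ((n2 t * b0 t - n0 t * b2 t) * (n2 t * b0 t - n0 t * b2 t) +
       (n0 t * b1 t - n1 t * b0 t) * (n0 t * b1 t - n1 t * b0 t))) 0 0 := by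
  have u1 := (hn1.mul hb2).sub (hn2.mul hb1)
  have u2 := (hn2.mul hb0).sub (hn0.mul hb2)
  have u3 := (hn0.mul hb1).sub (hn1.mul hb0)
  have T := (u1.mul u1).add ((u2.mul u2).add (u3.mul u3))
  refine T.congr_deriv ?_
  symm
  simp only [Pi.mul_apply, Pi.sub_apply]
  rw [e0, e1, e2, g0, g1, g2]
  linear_combination (2 * (B0 * B0 + B1 * B1 + B2 * B2)) * oAC.symm
    - (2 * (C0 * B0 + C1 * B1 + C2 * B2)) * oAB.symm

/-- Orthogonality of `N` and a directional derivative of `N`, from `‖N‖ ≡ 1`. -/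
lemma orth_of_norm {D : Set (ℝ × ℝ)} (hD : IsOpen D) {N : ℝ × ℝ → E3}
    (hnorm : ∀ q ∈ D, ‖N q‖ = 1) {p : ℝ × ℝ} (hp : p ∈ D) {C : E3} {w : ℝ × ℝ}
    (hNd : HasLineDerivAt ℝ N C p w) : dot (N p) C = 0 := by
  have hev : ∀ᶠ t in nhds (0 : ℝ), p + t • w ∈ D := by
    have hc : Continuous (fun t : ℝ => p + t • w) := by continuity
    have ht : Filter.Tendsto (fun t : ℝ => p + t • w) (nhds 0) (nhds p) := by
      have := hc.tendsto 0
      simpa using this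
    exact ht (hD.mem_nhds hp)
  have hn : ∀ i : Fin 3, HasDerivAt (fun t : ℝ => N (p + t • w) i) (C i) 0 :=
    fun i => comp_coord hNd i
  set s : ℝ → ℝ := fun t => N (p + t • w) 0 * N (p + t • w) 0 +
      (N (p + t • w) 1 * N (p + t • w) 1 + N (p + t • w) 2 * N (p + t • w) 2) with hs
  have hsd : HasDerivAt s
      (C 0 * N p 0 + N p 0 * C 0 + (C 1 * N p 1 + N p 1 * C 1 + (C 2 * N p 2 + N p 2 * C 2))) 0 := by
    have := ((hn 0).mul (hn 0)).add (((hn 1).mul (hn 1)).add ((hn 2).mul (hn 2)))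
    simp at this; exact this
  have hsc : HasDerivAt s 0 0 := by
    have hconst : HasDerivAt (fun _ : ℝ => (1 : ℝ)) 0 0 := hasDerivAt_const 0 1
    refine hconst.congr_of_eventuallyEq ?_
    filter_upwards [hev] with t ht
    have h1 : dot (N (p + t • w)) (N (p + t • w)) = 1 := by
      have := hnorm _ ht
      rw [dot, real_inner_self_eq_norm_sq, this]; norm_num
    rw [dot_expand] at h1
    simp only [hs]
    linarith
  have := hsd.unique hsc
  rw [dot_expand]
  linarith

/-- Core lemma: the squared norm of `cross3 N b` has vanishing line derivative
in direction `w`, given the relevant derivative and orthogonality hypotheses. -/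
lemma core {N b : ℝ × ℝ → E3} {p : ℝ × ℝ} {w : ℝ × ℝ} {C : E3} {H : ℝ}
    (hNd : HasLineDerivAt ℝ N C p w)
    (hbd : HasLineDerivAt ℝ b (H • N p) p w)
    (oAB : dot (N p) (b p) = 0) (oAC : dot (N p) C = 0) :
    HasLineDerivAt ℝ (fun q => dot (cross3 (N q) (b q)) (cross3 (N q) (b q))) 0 p w := by
  rw [dot_expand] at oAB oAC
  have hn : ∀ i : Fin 3, HasDerivAt (fun t : ℝ => N (p + t • w) i) (C i) 0 :=
    fun i => comp_coord hNd i
  have hb : ∀ i : Fin 3, HasDerivAt (fun t : ℝ => b (p + t • w) i) (H * N p i) 0 := by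
    intro i
    have := comp_coord hbd i
    simpa using this
  have hz : (p : ℝ × ℝ) + (0 : ℝ) • w = p := by simp
  have ez : ∀ (g : ℝ × ℝ → E3) (i : Fin 3), (fun t : ℝ => g (p + t • w) i) 0 = g p i := by
    intro g i; simp only [hz]
  have key := key_deriv (hn 0) (hn 1) (hn 2) (hb 0) (hb 1) (hb 2)
    (ez N 0) (ez N 1) (ez N 2) (ez b 0) (ez b 1) (ez b 2) oAB oAC
  show HasDerivAt (fun t => dot (cross3 (N (p + t • w)) (b (p + t • w)))
      (cross3 (N (p + t • w)) (b (p + t • w)))) 0 0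
  have : (fun t : ℝ => dot (cross3 (N (p + t • w)) (b (p + t • w)))
      (cross3 (N (p + t • w)) (b (p + t • w)))) =
      fun t => (N (p + t • w) 1 * b (p + t • w) 2 - N (p + t • w) 2 * b (p + t • w) 1) *
        (N (p + t • w) 1 * b (p + t • w) 2 - N (p + t • w) 2 * b (p + t • w) 1) +
      ((N (p + t • w) 2 * b (p + t • w) 0 - N (p + t • w) 0 * b (p + t • w) 2) *
        (N (p + t • w) 2 * b (p + t • w) 0 - N (p + t • w) 0 * b (p + t • w) 2) +
       (N (p + t • w) 0 * b (p + t • w) 1 - N (p + t • w) 1 * b (p + t • w) 0) *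
        (N (p + t • w) 0 * b (p + t • w) 1 - N (p + t • w) 1 * b (p + t • w) 0)) := by
    funext t; exact dot_cross3_self _ _
  rw [this]
  exact key


/-- For a weakly-regular C^{1M} ps-front, `∂y⟨f_x,f_x⟩ = 0` and `∂x⟨f_y,f_y⟩ = 0` on `D`:
`⟨f_x,f_x⟩` depends only on `x` and `⟨f_y,f_y⟩` depends only on `y`. -/
theorem stmt_3 (D : Set (ℝ × ℝ)) (hD : IsOpen D)
    (f N : ℝ × ℝ → E3) (h : PsFront D f N) :
    ∀ p ∈ D,
      HasLineDerivAt ℝ (fun q => dot (pdx f q) (pdx f q)) 0 p ((0 : ℝ), (1 : ℝ)) ∧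
      HasLineDerivAt ℝ (fun q => dot (pdy f q) (pdy f q)) 0 p ((1 : ℝ), (0 : ℝ)) := by
  obtain ⟨hfC, hfreg, ⟨⟨hN1, hNxy, hNyx, _, _, _⟩, hnorm, hNreg, H, hH⟩, hfront⟩ := h
  intro p hp
  -- differentiability of N at p
  have hdiff : DifferentiableAt ℝ N p :=
    (hN1.contDiffAt (hD.mem_nhds hp)).differentiableAt one_ne_zero
  have hldx : HasLineDerivAt ℝ N (pdx N p) p ((1 : ℝ), (0 : ℝ)) := by
    have := hdiff.hasFDerivAt.hasLineDerivAt ((1 : ℝ), (0 : ℝ))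
    rwa [pdx, hdiff.lineDeriv_eq_fderiv]
  have hldy : HasLineDerivAt ℝ N (pdy N p) p ((0 : ℝ), (1 : ℝ)) := by
    have := hdiff.hasFDerivAt.hasLineDerivAt ((0 : ℝ), (1 : ℝ))
    rwa [pdy, hdiff.lineDeriv_eq_fderiv]
  have oABx : dot (N p) (pdx N p) = 0 := orth_of_norm hD hnorm hp hldx
  have oABy : dot (N p) (pdy N p) = 0 := orth_of_norm hD hnorm hp hldy
  -- mixed derivatives
  have hmixx : HasLineDerivAt ℝ (pdx N) (H p • N p) p ((0 : ℝ), (1 : ℝ)) := by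
    have := (hNxy p hp).hasLineDerivAt
    rwa [show lineDeriv ℝ (pdx N) p ((0:ℝ), (1:ℝ)) = pdy (pdx N) p from rfl, (hH p hp).1] at this
  have hmixy : HasLineDerivAt ℝ (pdy N) (H p • N p) p ((1 : ℝ), (0 : ℝ)) := by
    have := (hNyx p hp).hasLineDerivAt
    rwa [show lineDeriv ℝ (pdy N) p ((1:ℝ), (0:ℝ)) = pdx (pdy N) p from rfl, (hH p hp).2] at this
  have heq : (fun q => dot (pdx f q) (pdx f q)) =ᶠ[nhds p]
      (fun q => dot (cross3 (N q) (pdx N q)) (cross3 (N q) (pdx N q))) := by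
    filter_upwards [hD.mem_nhds hp] with q hq
    rw [(hfront q hq).1]
  have heq' : (fun q => dot (pdy f q) (pdy f q)) =ᶠ[nhds p]
      (fun q => dot (cross3 (N q) (pdy N q)) (cross3 (N q) (pdy N q))) := by
    filter_upwards [hD.mem_nhds hp] with q hq
    rw [(hfront q hq).2]
    simp [dot]
  constructor
  · exact heq.hasLineDerivAt_iff.mpr (core hldy hmixx oABx oABy)
  · exact heq'.hasLineDerivAt_iff.mpr (core hldx hmixy oABy oABx)


end
end

section
/- Let D = I × J be a product of open intervals and f : D → ℝ³ a weakly-regular C^{1M} ps-front with weakly harmonic map N. Fix (x₀,y₀) ∈ D and define s(x) = ∫_{x₀}^x ‖f_x(t,y₀)‖ dt for x ∈ I and t(y) = ∫_{y₀}^y ‖f_y(x₀,u)‖ du for y ∈ J. Then s and t are C¹ with everywhere positive derivative (hence C¹ diffeomorphisms onto open intervals I′ and J′), the map g : I′ × J′ → ℝ³, g(σ,τ) := f(s⁻¹(σ), t⁻¹(τ)), is C^{1M}, and g satisfies ‖g_σ‖ ≡ 1 and ‖g_τ‖ ≡ 1 (i.e., g is a Chebyshev reparametrization of f, with associated map N ∘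 (s⁻¹ × t⁻¹)). -/
noncomputable section

open Real Set

section Helpers
variable {E : Type*} [NormedAddCommGroup E] [NormedSpace ℝ E]

lemma hasDerivAt_comp_add_iff {G : ℝ → E} {v : E} {x : ℝ} :
    HasDerivAt (fun t => G (x + t)) v 0 ↔ HasDerivAt G v x := by
  constructor
  · intro h
    have h2 : HasDerivAt (fun u : ℝ => u - x) 1 x := by
      simpa using (hasDerivAt_id x).sub_const x
    have h' : HasDerivAt (fun t => G (x + t)) v (x - x) := by simpa using h
    have := HasDerivAt.scomp (h := fun u => u - x) x h' h2
    simpa using this.congr_of_eventuallyEq (by filter_upwards with u; simp)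
  · intro h
    have h2 : HasDerivAt (fun t : ℝ => x + t) 1 0 := by
      simpa using (hasDerivAt_id (0:ℝ)).const_add x
    have h' : HasDerivAt G v (x + 0) := by simpa using h
    have := HasDerivAt.scomp (h := fun t => x + t) (0:ℝ) h' h2
    simpa [Function.comp_def] using this

lemma hasLineDerivAt_x_iff {F : ℝ × ℝ → E} {v : E} {p : ℝ × ℝ} :
    HasLineDerivAt ℝ F v p ((1:ℝ), (0:ℝ)) ↔ HasDerivAt (fun u => F (u, p.2)) v p.1 := by
  have key : ∀ t : ℝ, p + t • ((1:ℝ),(0:ℝ)) = (p.1 + t, p.2) := by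
    intro t
    simp [Prod.ext_iff]
  rw [HasLineDerivAt]
  simp only [key]
  exact hasDerivAt_comp_add_iff (G := fun u => F (u, p.2))

lemma hasLineDerivAt_y_iff {F : ℝ × ℝ → E} {v : E} {p : ℝ × ℝ} :
    HasLineDerivAt ℝ F v p ((0:ℝ), (1:ℝ)) ↔ HasDerivAt (fun u => F (p.1, u)) v p.2 := by
  have key : ∀ t : ℝ, p + t • ((0:ℝ),(1:ℝ)) = (p.1, p.2 + t) := by
    intro t
    simp [Prod.ext_iff]
  rw [HasLineDerivAt]
  simp only [key]
  exact hasDerivAt_comp_add_iff (G := fun u => F (p.1, u))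

lemma pdx_eq {F : ℝ × ℝ → E} {v : E} {p : ℝ × ℝ}
    (h : HasDerivAt (fun u => F (u, p.2)) v p.1) : pdx F p = v :=
  (hasLineDerivAt_x_iff.mpr h).lineDeriv

lemma pdy_eq {F : ℝ × ℝ → E} {v : E} {p : ℝ × ℝ}
    (h : HasDerivAt (fun u => F (p.1, u)) v p.2) : pdy F p = v :=
  (hasLineDerivAt_y_iff.mpr h).lineDeriv

lemma sliceX_hasDerivAt {F : ℝ × ℝ → E} {p : ℝ × ℝ} (h : DifferentiableAt ℝ F p) :
    HasDerivAt (fun u => F (u, p.2)) (pdx F p) p.1 := by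
  have h1 : HasDerivAt (fun u : ℝ => (u, p.2)) ((1:ℝ),(0:ℝ)) p.1 :=
    (hasDerivAt_id p.1).prodMk (hasDerivAt_const _ _)
  have := h.hasFDerivAt.comp_hasDerivAt (x := p.1) (by simpa using h1)
  have hval : pdx F p = fderiv ℝ F p ((1:ℝ),(0:ℝ)) := (h.hasFDerivAt.hasLineDerivAt _).lineDeriv
  rw [hval]
  exact this

lemma sliceY_hasDerivAt {F : ℝ × ℝ → E} {p : ℝ × ℝ} (h : DifferentiableAt ℝ F p) :
    HasDerivAt (fun u => F (p.1, u)) (pdy F p) p.2 := by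
  have h1 : HasDerivAt (fun u : ℝ => (p.1, u)) ((0:ℝ),(1:ℝ)) p.2 :=
    (hasDerivAt_const _ _).prodMk (hasDerivAt_id p.2)
  have := h.hasFDerivAt.comp_hasDerivAt (x := p.2) (by simpa using h1)
  have hval : pdy F p = fderiv ℝ F p ((0:ℝ),(1:ℝ)) := (h.hasFDerivAt.hasLineDerivAt _).lineDeriv
  rw [hval]
  exact this

lemma diffAt_of_contDiffOn {F : ℝ × ℝ → E} {D : Set (ℝ × ℝ)} (hD : IsOpen D)
    (hF : ContDiffOn ℝ 1 F D) {p : ℝ × ℝ} (hp : p ∈ D) : DifferentiableAt ℝ F p :=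
  (hF.differentiableOn one_ne_zero).differentiableAt (hD.mem_nhds hp)

lemma continuousOn_pdx {F : ℝ × ℝ → E} {D : Set (ℝ × ℝ)} (hD : IsOpen D)
    (hF : ContDiffOn ℝ 1 F D) : ContinuousOn (pdx F) D := by
  have hfd : ContinuousOn (fderiv ℝ F) D := hF.continuousOn_fderiv_of_isOpen hD le_rfl
  have : ContinuousOn (fun p => fderiv ℝ F p ((1:ℝ),(0:ℝ))) D :=
    (ContinuousLinearMap.apply ℝ E ((1:ℝ),(0:ℝ))).continuous.comp_continuousOn hfd
  exact this.congr fun p hp =>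
    ((diffAt_of_contDiffOn hD hF hp).hasFDerivAt.hasLineDerivAt _).lineDeriv

lemma continuousOn_pdy {F : ℝ × ℝ → E} {D : Set (ℝ × ℝ)} (hD : IsOpen D)
    (hF : ContDiffOn ℝ 1 F D) : ContinuousOn (pdy F) D := by
  have hfd : ContinuousOn (fderiv ℝ F) D := hF.continuousOn_fderiv_of_isOpen hD le_rfl
  have : ContinuousOn (fun p => fderiv ℝ F p ((0:ℝ),(1:ℝ))) D :=
    (ContinuousLinearMap.apply ℝ E ((0:ℝ),(1:ℝ))).continuous.comp_continuousOn hfd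
  exact this.congr fun p hp =>
    ((diffAt_of_contDiffOn hD hF hp).hasFDerivAt.hasLineDerivAt _).lineDeriv

end Helpers

section Inverse

lemma inverse_pack {I : Set ℝ} {s c : ℝ → ℝ} (hI : IsOpen I) (hIc : I.OrdConnected)
    (hderiv : ∀ x ∈ I, HasDerivAt s (c x) x) (hc : ContinuousOn c I)
    (hpos : ∀ x ∈ I, 0 < c x) :
    ∃ sInv : ℝ → ℝ, IsOpen (s '' I) ∧ (s '' I).OrdConnected ∧ Set.BijOn s I (s '' I) ∧
      (∀ x ∈ I, sInv (s x) = x) ∧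
      (∀ σ ∈ s '' I, sInv σ ∈ I ∧ HasDerivAt sInv (c (sInv σ))⁻¹ σ) ∧
      ContinuousOn (fun σ => (c (sInv σ))⁻¹) (s '' I) ∧
      ContDiffOn ℝ 1 sInv (s '' I) := by
  have hconv : Convex ℝ I := convex_iff_ordConnected.mpr hIc
  have hcont : ContinuousOn s I := fun x hx => (hderiv x hx).continuousAt.continuousWithinAt
  have hmono : StrictMonoOn s I := by
    apply strictMonoOn_of_deriv_pos hconv hcont
    intro x hx
    rw [hI.interior_eq] at hx
    rw [(hderiv x hx).deriv]
    exact hpos x hx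
  set I' := s '' I with hI'def
  have hopen : IsOpen I' := by
    rw [isOpen_iff_mem_nhds]
    rintro σ ⟨x, hx, rfl⟩
    obtain ⟨ε, hε, hball⟩ := Metric.isOpen_iff.mp hI x hx
    have hsub : Set.Icc (x - ε/2) (x + ε/2) ⊆ I := by
      intro z hz
      apply hball
      rw [Metric.mem_ball, Real.dist_eq, abs_lt]
      constructor <;> [linarith [hz.1]; linarith [hz.2]]
    have hab : x - ε/2 ≤ x + ε/2 := by linarith
    have hIV : Set.Ioo (s (x - ε/2)) (s (x + ε/2)) ⊆ s '' Set.Ioo (x - ε/2) (x + ε/2) :=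
      intermediate_value_Ioo hab (hcont.mono hsub)
    have hmem : s x ∈ Set.Ioo (s (x - ε/2)) (s (x + ε/2)) := by
      constructor
      · exact hmono (hsub ⟨le_refl _, by linarith⟩) hx (by linarith)
      · exact hmono hx (hsub ⟨by linarith, le_refl _⟩) (by linarith)
    have : Set.Ioo (s (x - ε/2)) (s (x + ε/2)) ⊆ I' := by
      refine hIV.trans ?_
      apply Set.image_mono
      exact fun z hz => hsub ⟨hz.1.le, hz.2.le⟩
    exact Filter.mem_of_superset (isOpen_Ioo.mem_nhds hmem) this
  have hordc : I'.OrdConnected := (hconv.isPreconnected.image s hcont).ordConnected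
  have hbij : Set.BijOn s I I' := hmono.injOn.bijOn_image
  have : Nonempty ℝ := inferInstance
  set sInv := Function.invFunOn s I with hsInvdef
  have hleft : ∀ x ∈ I, sInv (s x) = x := fun x hx => hmono.injOn.leftInvOn_invFunOn hx
  have hmemI : ∀ σ ∈ I', sInv σ ∈ I := by
    rintro σ ⟨x, hx, rfl⟩
    exact Function.invFunOn_mem ⟨x, hx, rfl⟩
  have hright : ∀ σ ∈ I', s (sInv σ) = σ := by
    rintro σ ⟨x, hx, rfl⟩
    exact Function.invFunOn_eq ⟨x, hx, rfl⟩
  have hmonoInv : StrictMonoOn sInv I' := by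
    intro σ₁ h₁ σ₂ h₂ hlt
    by_contra hle
    push_neg at hle
    have : s (sInv σ₂) ≤ s (sInv σ₁) := by
      rcases eq_or_lt_of_le hle with h | h
      · rw [h]
      · exact (hmono (hmemI _ h₂) (hmemI _ h₁) h).le
    rw [hright _ h₁, hright _ h₂] at this
    exact absurd this (not_le.mpr hlt)
  have hInvImage : sInv '' I' = I := by
    apply Set.Subset.antisymm
    · rintro _ ⟨σ, hσ, rfl⟩; exact hmemI _ hσ
    · intro x hx
      exact ⟨s x, ⟨x, hx, rfl⟩, hleft x hx⟩
  have hcontInv : ∀ σ ∈ I', ContinuousAt sInv σ := by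
    intro σ hσ
    apply hmonoInv.continuousAt_of_image_mem_nhds (hopen.mem_nhds hσ)
    rw [hInvImage]
    exact hI.mem_nhds (hmemI _ hσ)
  have hderivInv : ∀ σ ∈ I', HasDerivAt sInv (c (sInv σ))⁻¹ σ := by
    intro σ hσ
    apply HasDerivAt.of_local_left_inverse (hcontInv σ hσ) (hderiv _ (hmemI _ hσ))
      (hpos _ (hmemI _ hσ)).ne'
    filter_upwards [hopen.mem_nhds hσ] with τ hτ using hright τ hτ
  have hcInv : ContinuousOn (fun σ => (c (sInv σ))⁻¹) I' := by
    apply ContinuousOn.inv₀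
    · exact hc.comp (fun σ hσ => (hcontInv σ hσ).continuousWithinAt) hmemI
    · exact fun σ hσ => (hpos _ (hmemI _ hσ)).ne'
  refine ⟨sInv, hopen, hordc, hbij, hleft, fun σ hσ => ⟨hmemI _ hσ, hderivInv σ hσ⟩, hcInv, ?_⟩
  rw [show (1 : WithTop ℕ∞) = 0 + 1 by rfl, contDiffOn_succ_iff_deriv_of_isOpen hopen]
  refine ⟨fun σ hσ => ((hderivInv σ hσ).differentiableAt).differentiableWithinAt,
    by simp, ?_⟩
  rw [contDiffOn_zero]
  exact hcInv.congr fun σ hσ => (hderivInv σ hσ).deriv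
end Inverse

section Reparam
variable {E : Type*} [NormedAddCommGroup E] [NormedSpace ℝ E]

lemma reparam_sliceX {F : ℝ × ℝ → E} {u : ℝ → ℝ} {aσ σ w : ℝ}
    (hF : DifferentiableAt ℝ F (u σ, w)) (hu : HasDerivAt u aσ σ) :
    HasDerivAt (fun x => F (u x, w)) (aσ • pdx F (u σ, w)) σ :=
  HasDerivAt.scomp σ (sliceX_hasDerivAt hF) hu

lemma reparam_sliceY {F : ℝ × ℝ → E} {v : ℝ → ℝ} {bτ τ w : ℝ}
    (hF : DifferentiableAt ℝ F (w, v τ)) (hv : HasDerivAt v bτ τ) :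
    HasDerivAt (fun y => F (w, v y)) (bτ • pdy F (w, v τ)) τ :=
  HasDerivAt.scomp τ (sliceY_hasDerivAt hF) hv

lemma reparam_all {F : ℝ × ℝ → E} {I' J' : Set ℝ} {u v a b : ℝ → ℝ} {D : Set (ℝ × ℝ)}
    (hI' : IsOpen I') (hJ' : IsOpen J') (hD : IsOpen D)
    (hu : ∀ σ ∈ I', HasDerivAt u (a σ) σ) (hv : ∀ τ ∈ J', HasDerivAt v (b τ) τ)
    (ha : ContinuousOn a I') (hb : ContinuousOn b J')
    (hCu : ContDiffOn ℝ 1 u I') (hCv : ContDiffOn ℝ 1 v J')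
    (hmaps : ∀ q : ℝ × ℝ, q ∈ I' ×ˢ J' → (u q.1, v q.2) ∈ D)
    (hF : C1M D F) :
    C1M (I' ×ˢ J') (fun q => F (u q.1, v q.2)) ∧
    (∀ q ∈ I' ×ˢ J',
      pdx (fun q => F (u q.1, v q.2)) q = a q.1 • pdx F (u q.1, v q.2) ∧
      pdy (fun q => F (u q.1, v q.2)) q = b q.2 • pdy F (u q.1, v q.2) ∧
      pdy (pdx (fun q => F (u q.1, v q.2))) q = (a q.1 * b q.2) • pdy (pdx F) (u q.1, v q.2) ∧
      pdx (pdy (fun q => F (u q.1, v q.2))) q = (a q.1 * b q.2) • pdx (pdy F) (u q.1, v q.2)) := by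
  set G : ℝ × ℝ → E := fun q => F (u q.1, v q.2) with hGdef
  set φ : ℝ × ℝ → ℝ × ℝ := fun q => (u q.1, v q.2) with hφdef
  have hD' : IsOpen (I' ×ˢ J') := hI'.prod hJ'
  have hdiffF : ∀ q ∈ I' ×ˢ J', DifferentiableAt ℝ F (φ q) :=
    fun q hq => diffAt_of_contDiffOn hD hF.1 (hmaps q hq)
  -- first partials
  have hGx : ∀ q ∈ I' ×ˢ J', HasDerivAt (fun x => G (x, q.2)) (a q.1 • pdx F (φ q)) q.1 :=
    fun q hq => reparam_sliceX (hdiffF q hq) (hu q.1 hq.1)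
  have hGy : ∀ q ∈ I' ×ˢ J', HasDerivAt (fun y => G (q.1, y)) (b q.2 • pdy F (φ q)) q.2 :=
    fun q hq => reparam_sliceY (hdiffF q hq) (hv q.2 hq.2)
  have hpdxG : ∀ q ∈ I' ×ˢ J', pdx G q = a q.1 • pdx F (φ q) := fun q hq => pdx_eq (hGx q hq)
  have hpdyG : ∀ q ∈ I' ×ˢ J', pdy G q = b q.2 • pdy F (φ q) := fun q hq => pdy_eq (hGy q hq)
  -- second partials: d/dy of pdx G
  have hGxy : ∀ q ∈ I' ×ˢ J',
      HasDerivAt (fun t => pdx G (q.1, t)) ((a q.1 * b q.2) • pdy (pdx F) (φ q)) q.2 := by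
    intro q hq
    have hline : HasLineDerivAt ℝ (pdx F) (pdy (pdx F) (φ q)) (φ q) ((0:ℝ),(1:ℝ)) :=
      (hF.2.1 _ (hmaps q hq)).hasLineDerivAt
    have hslice : HasDerivAt (fun y => pdx F ((φ q).1, y)) (pdy (pdx F) (φ q)) (φ q).2 :=
      hasLineDerivAt_y_iff.mp hline
    have hcomp : HasDerivAt (fun t => pdx F (u q.1, v t)) (b q.2 • pdy (pdx F) (φ q)) q.2 :=
      HasDerivAt.scomp q.2 hslice (hv q.2 hq.2)
    have hsm := hcomp.const_smul (a q.1)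
    have heq : (fun t => pdx G (q.1, t)) =ᶠ[nhds q.2] (fun t => a q.1 • pdx F (u q.1, v t)) := by
      filter_upwards [hJ'.mem_nhds hq.2] with t ht
      exact hpdxG (q.1, t) ⟨hq.1, ht⟩
    have := hsm.congr_of_eventuallyEq heq
    simpa [smul_smul] using this
  have hGyx : ∀ q ∈ I' ×ˢ J',
      HasDerivAt (fun t => pdy G (t, q.2)) ((a q.1 * b q.2) • pdx (pdy F) (φ q)) q.1 := by
    intro q hq
    have hline : HasLineDerivAt ℝ (pdy F) (pdx (pdy F) (φ q)) (φ q) ((1:ℝ),(0:ℝ)) :=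
      (hF.2.2.1 _ (hmaps q hq)).hasLineDerivAt
    have hslice : HasDerivAt (fun x => pdy F (x, (φ q).2)) (pdx (pdy F) (φ q)) (φ q).1 :=
      hasLineDerivAt_x_iff.mp hline
    have hcomp : HasDerivAt (fun t => pdy F (u t, v q.2)) (a q.1 • pdx (pdy F) (φ q)) q.1 :=
      HasDerivAt.scomp q.1 hslice (hu q.1 hq.1)
    have hsm := hcomp.const_smul (b q.2)
    have heq : (fun t => pdy G (t, q.2)) =ᶠ[nhds q.1] (fun t => b q.2 • pdy F (u t, v q.2)) := by
      filter_upwards [hI'.mem_nhds hq.1] with t ht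
      exact hpdyG (t, q.2) ⟨ht, hq.2⟩
    have := hsm.congr_of_eventuallyEq heq
    have hcomm : b q.2 • a q.1 • pdx (pdy F) (φ q) = (a q.1 * b q.2) • pdx (pdy F) (φ q) := by
      rw [smul_smul, mul_comm]
    rw [hcomm] at this
    exact this
  have hpdyxG : ∀ q ∈ I' ×ˢ J',
      pdy (pdx G) q = (a q.1 * b q.2) • pdy (pdx F) (φ q) := fun q hq => pdy_eq (hGxy q hq)
  have hpdxyG : ∀ q ∈ I' ×ˢ J',
      pdx (pdy G) q = (a q.1 * b q.2) • pdx (pdy F) (φ q) := fun q hq => pdx_eq (hGyx q hq)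
  -- continuity infrastructure
  have hφC : ContDiffOn ℝ 1 φ (I' ×ˢ J') :=
    (hCu.comp contDiff_fst.contDiffOn (fun q hq => hq.1)).prodMk
      (hCv.comp contDiff_snd.contDiffOn (fun q hq => hq.2))
  have hφcont : ContinuousOn φ (I' ×ˢ J') := hφC.continuousOn
  have habcont : ContinuousOn (fun q : ℝ × ℝ => a q.1 * b q.2) (I' ×ˢ J') :=
    (ha.comp continuousOn_fst (fun q hq => hq.1)).mul
      (hb.comp continuousOn_snd (fun q hq => hq.2))
  have hGC : ContDiffOn ℝ 1 G (I' ×ˢ J') := hF.1.comp hφC (fun q hq => hmaps q hq)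
  refine ⟨⟨hGC, ?_, ?_, ?_, ?_, ?_⟩, fun q hq => ⟨hpdxG q hq, hpdyG q hq, hpdyxG q hq, hpdxyG q hq⟩⟩
  · exact fun q hq => (hasLineDerivAt_y_iff.mpr (hGxy q hq)).lineDifferentiableAt
  · exact fun q hq => (hasLineDerivAt_x_iff.mpr (hGyx q hq)).lineDifferentiableAt
  · exact (habcont.smul ((hF.2.2.2.1).comp hφcont (fun q hq => hmaps q hq))).congr hpdyxG
  · exact (habcont.smul ((hF.2.2.2.2.1).comp hφcont (fun q hq => hmaps q hq))).congr hpdxyG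
  · intro q hq
    rw [hpdyxG q hq, hpdxyG q hq, hF.2.2.2.2.2 _ (hmaps q hq)]
end Reparam

section CrossAlg

lemma inner_cross3_self (a b : E3) :
    (inner ℝ (cross3 a b) (cross3 a b) : ℝ) =
      (inner ℝ a a : ℝ) * (inner ℝ b b : ℝ) - (inner ℝ a b : ℝ)^2 := by
  simp only [cross3, PiLp.inner_apply, RCLike.inner_apply, conj_trivial,
    Fin.sum_univ_three, WithLp.equiv_symm_apply, PiLp.toLp_apply]
  simp [Matrix.cons_val_zero, Matrix.cons_val_one]
  ring

lemma cross3_smul_right (a : E3) (c : ℝ) (b : E3) : cross3 a (c • b) = c • cross3 a b := by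
  apply (WithLp.equiv 2 (Fin 3 → ℝ)).injective
  ext i
  fin_cases i <;>
    simp [cross3, WithLp.equiv_symm_apply, PiLp.toLp_apply, PiLp.smul_apply, smul_eq_mul] <;> ring

lemma norm_cross3 {a b : E3} (ha : ‖a‖ = 1) (hab : (inner ℝ a b : ℝ) = 0) :
    ‖cross3 a b‖ = ‖b‖ := by
  have h1 : ‖cross3 a b‖^2 = ‖b‖^2 := by
    rw [← real_inner_self_eq_norm_sq, ← real_inner_self_eq_norm_sq, inner_cross3_self,
      hab, real_inner_self_eq_norm_sq a, ha]
    ring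
  nlinarith [norm_nonneg (cross3 a b), norm_nonneg b]

end CrossAlg

section Ortho
variable {I J : Set ℝ} {N : ℝ × ℝ → E3}

lemma ortho_pdx (hI : IsOpen I) (hJ : IsOpen J)
    (hC : ContDiffOn ℝ 1 N (I ×ˢ J)) (hunit : ∀ p ∈ I ×ˢ J, ‖N p‖ = 1)
    {p : ℝ × ℝ} (hp : p ∈ I ×ˢ J) : (inner ℝ (N p) (pdx N p) : ℝ) = 0 := by
  have hD : IsOpen (I ×ˢ J) := hI.prod hJ
  have hd : HasDerivAt (fun x' => N (x', p.2)) (pdx N p) p.1 :=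
    sliceX_hasDerivAt (diffAt_of_contDiffOn hD hC hp)
  have hχ : HasDerivAt (fun x' => (inner ℝ (N (x', p.2)) (N (x', p.2)) : ℝ))
      ((inner ℝ (N p) (pdx N p) : ℝ) + (inner ℝ (pdx N p) (N p) : ℝ)) p.1 := by
    have := HasDerivAt.inner ℝ hd hd
    simpa using this
  have hone : HasDerivAt (fun x' : ℝ => (inner ℝ (N (x', p.2)) (N (x', p.2)) : ℝ)) 0 p.1 := by
    apply (hasDerivAt_const p.1 (1:ℝ)).congr_of_eventuallyEq
    filter_upwards [hI.mem_nhds hp.1] with x' hx'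
    rw [real_inner_self_eq_norm_sq, hunit (x', p.2) ⟨hx', hp.2⟩]
    norm_num
  have := hχ.unique hone
  rw [real_inner_comm (pdx N p) (N p)] at this
  rw [real_inner_comm (pdx N p) (N p)]
  linarith

lemma ortho_pdy (hI : IsOpen I) (hJ : IsOpen J)
    (hC : ContDiffOn ℝ 1 N (I ×ˢ J)) (hunit : ∀ p ∈ I ×ˢ J, ‖N p‖ = 1)
    {p : ℝ × ℝ} (hp : p ∈ I ×ˢ J) : (inner ℝ (N p) (pdy N p) : ℝ) = 0 := by
  have hD : IsOpen (I ×ˢ J) := hI.prod hJ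
  have hd : HasDerivAt (fun y' => N (p.1, y')) (pdy N p) p.2 :=
    sliceY_hasDerivAt (diffAt_of_contDiffOn hD hC hp)
  have hχ : HasDerivAt (fun y' => (inner ℝ (N (p.1, y')) (N (p.1, y')) : ℝ))
      ((inner ℝ (N p) (pdy N p) : ℝ) + (inner ℝ (pdy N p) (N p) : ℝ)) p.2 := by
    have := HasDerivAt.inner ℝ hd hd
    simpa using this
  have hone : HasDerivAt (fun y' : ℝ => (inner ℝ (N (p.1, y')) (N (p.1, y')) : ℝ)) 0 p.2 := by
    apply (hasDerivAt_const p.2 (1:ℝ)).congr_of_eventuallyEq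
    filter_upwards [hJ.mem_nhds hp.2] with y' hy'
    rw [real_inner_self_eq_norm_sq, hunit (p.1, y') ⟨hp.1, hy'⟩]
    norm_num
  have := hχ.unique hone
  rw [real_inner_comm (pdy N p) (N p)] at this
  rw [real_inner_comm (pdy N p) (N p)]
  linarith

end Ortho

section Const
variable {I J : Set ℝ} {N : ℝ × ℝ → E3}

/-- `‖N_x‖` depends only on `x`. -/
lemma normNx_const (hI : IsOpen I) (hJ : IsOpen J) (hJc : J.OrdConnected)
    (hC : C1M (I ×ˢ J) N) (hunit : ∀ p ∈ I ×ˢ J, ‖N p‖ = 1)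
    {h : ℝ × ℝ → ℝ}
    (hh : ∀ p ∈ I ×ˢ J, pdy (pdx N) p = h p • N p)
    {x : ℝ} (hx : x ∈ I) {y y' : ℝ} (hy : y ∈ J) (hy' : y' ∈ J) :
    ‖pdx N (x, y)‖ = ‖pdx N (x, y')‖ := by
  set ψ : ℝ → ℝ := fun t => (inner ℝ (pdx N (x, t)) (pdx N (x, t)) : ℝ) with hψdef
  have hψ0 : ∀ t ∈ J, HasDerivAt ψ 0 t := by
    intro t ht
    have hp : ((x, t) : ℝ × ℝ) ∈ I ×ˢ J := ⟨hx, ht⟩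
    have hslice : HasDerivAt (fun y' => pdx N (x, y')) (pdy (pdx N) (x, t)) t :=
      hasLineDerivAt_y_iff.mp (hC.2.1 _ hp).hasLineDerivAt
    have hd := HasDerivAt.inner ℝ hslice hslice
    have hval : (inner ℝ (pdx N (x, t)) (pdy (pdx N) (x, t)) : ℝ)
        + (inner ℝ (pdy (pdx N) (x, t)) (pdx N (x, t)) : ℝ) = 0 := by
      rw [hh _ hp, real_inner_smul_right, real_inner_smul_left,
        real_inner_comm (N (x,t)) (pdx N (x,t)),
        ortho_pdx hI hJ hC.1 hunit hp]
      ring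
    rw [hval] at hd
    exact hd
  have hconvJ : Convex ℝ J := convex_iff_ordConnected.mpr hJc
  have hdiff : DifferentiableOn ℝ ψ J :=
    fun t ht => ((hψ0 t ht).differentiableAt).differentiableWithinAt
  have hfd : ∀ t ∈ J, fderivWithin ℝ ψ J t = 0 := by
    intro t ht
    rw [fderivWithin_of_isOpen hJ ht, (hψ0 t ht).hasFDerivAt.fderiv]
    ext
    simp
  have hval := hconvJ.is_const_of_fderivWithin_eq_zero hdiff hfd hy hy'
  have h1 : ‖pdx N (x, y)‖^2 = ‖pdx N (x, y')‖^2 := by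
    rw [← real_inner_self_eq_norm_sq, ← real_inner_self_eq_norm_sq]
    exact hval
  nlinarith [norm_nonneg (pdx N (x,y)), norm_nonneg (pdx N (x,y'))]

/-- `‖N_y‖` depends only on `y`. -/
lemma normNy_const (hI : IsOpen I) (hJ : IsOpen J) (hIc : I.OrdConnected)
    (hC : C1M (I ×ˢ J) N) (hunit : ∀ p ∈ I ×ˢ J, ‖N p‖ = 1)
    {h : ℝ × ℝ → ℝ}
    (hh : ∀ p ∈ I ×ˢ J, pdx (pdy N) p = h p • N p)
    {y : ℝ} (hy : y ∈ J) {x x' : ℝ} (hx : x ∈ I) (hx' : x' ∈ I) :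
    ‖pdy N (x, y)‖ = ‖pdy N (x', y)‖ := by
  set ψ : ℝ → ℝ := fun t => (inner ℝ (pdy N (t, y)) (pdy N (t, y)) : ℝ) with hψdef
  have hψ0 : ∀ t ∈ I, HasDerivAt ψ 0 t := by
    intro t ht
    have hp : ((t, y) : ℝ × ℝ) ∈ I ×ˢ J := ⟨ht, hy⟩
    have hslice : HasDerivAt (fun x' => pdy N (x', y)) (pdx (pdy N) (t, y)) t :=
      hasLineDerivAt_x_iff.mp (hC.2.2.1 _ hp).hasLineDerivAt
    have hd := HasDerivAt.inner ℝ hslice hslice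
    have hval : (inner ℝ (pdy N (t, y)) (pdx (pdy N) (t, y)) : ℝ)
        + (inner ℝ (pdx (pdy N) (t, y)) (pdy N (t, y)) : ℝ) = 0 := by
      rw [hh _ hp, real_inner_smul_right, real_inner_smul_left,
        real_inner_comm (N (t,y)) (pdy N (t,y)),
        ortho_pdy hI hJ hC.1 hunit hp]
      ring
    rw [hval] at hd
    exact hd
  have hconvI : Convex ℝ I := convex_iff_ordConnected.mpr hIc
  have hdiff : DifferentiableOn ℝ ψ I :=
    fun t ht => ((hψ0 t ht).differentiableAt).differentiableWithinAt
  have hfd : ∀ t ∈ I, fderivWithin ℝ ψ I t = 0 := by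
    intro t ht
    rw [fderivWithin_of_isOpen hI ht, (hψ0 t ht).hasFDerivAt.fderiv]
    ext
    simp
  have hval := hconvI.is_const_of_fderivWithin_eq_zero hdiff hfd hx hx'
  have h1 : ‖pdy N (x, y)‖^2 = ‖pdy N (x', y)‖^2 := by
    rw [← real_inner_self_eq_norm_sq, ← real_inner_self_eq_norm_sq]
    exact hval
  nlinarith [norm_nonneg (pdy N (x,y)), norm_nonneg (pdy N (x',y))]

end Const

section FTCpack

lemma ftc_pack {I : Set ℝ} (hI : IsOpen I) (hIc : I.OrdConnected) {c : ℝ → ℝ}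
    (hc : ContinuousOn c I) {x₀ : ℝ} (hx₀ : x₀ ∈ I) {s : ℝ → ℝ}
    (hs : ∀ x, s x = ∫ u in x₀..x, c u) : ∀ x ∈ I, HasDerivAt s (c x) x := by
  intro x hx
  have hfun : s = fun x => ∫ u in x₀..x, c u := funext hs
  rw [hfun]
  have hint : IntervalIntegrable c MeasureTheory.volume x₀ x :=
    (hc.mono (hIc.uIcc_subset hx₀ hx)).intervalIntegrable
  exact intervalIntegral.integral_hasDerivAt_right hint
    (hc.stronglyMeasurableAtFilter hI x hx) (hc.continuousAt (hI.mem_nhds hx))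

end FTCpack

/-- Chebyshev reparametrization of a weakly-regular C^{1M} ps-front on a product of
open intervals: the arclength functions `s`, `t` along the coordinate curves through
`(x₀,y₀)` are C¹ with positive derivative, hence C¹ diffeomorphisms onto open intervals
`I'`, `J'`, and `g(σ,τ) = f(s⁻¹ σ, t⁻¹ τ)` is a C^{1M} ps-front (with associated map
`N ∘ (s⁻¹ × t⁻¹)`) satisfying `‖g_σ‖ ≡ 1` and `‖g_τ‖ ≡ 1`. -/
theorem stmt_4 (I J : Set ℝ) (hI : IsOpen I) (hJ : IsOpen J)
    (hIc : I.OrdConnected) (hJc : J.OrdConnected)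
    (f N : ℝ × ℝ → E3) (h : PsFront (I ×ˢ J) f N)
    (x₀ y₀ : ℝ) (hx₀ : x₀ ∈ I) (hy₀ : y₀ ∈ J)
    (s t : ℝ → ℝ)
    (hs : ∀ x, s x = ∫ u in x₀..x, ‖pdx f (u, y₀)‖)
    (ht : ∀ y, t y = ∫ u in y₀..y, ‖pdy f (x₀, u)‖) :
    (∀ x ∈ I, HasDerivAt s ‖pdx f (x, y₀)‖ x ∧ 0 < ‖pdx f (x, y₀)‖) ∧
    (∀ y ∈ J, HasDerivAt t ‖pdy f (x₀, y)‖ y ∧ 0 < ‖pdy f (x₀, y)‖) ∧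
    ContDiffOn ℝ 1 s I ∧ ContDiffOn ℝ 1 t J ∧
    ∃ (I' J' : Set ℝ) (sInv tInv : ℝ → ℝ),
      IsOpen I' ∧ IsOpen J' ∧ I'.OrdConnected ∧ J'.OrdConnected ∧
      Set.BijOn s I I' ∧ Set.BijOn t J J' ∧
      (∀ x ∈ I, sInv (s x) = x) ∧ (∀ y ∈ J, tInv (t y) = y) ∧
      ContDiffOn ℝ 1 sInv I' ∧ ContDiffOn ℝ 1 tInv J' ∧
      PsFront (I' ×ˢ J') (fun q => f (sInv q.1, tInv q.2))
        (fun q => N (sInv q.1, tInv q.2)) ∧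
      (∀ q ∈ I' ×ˢ J',
        ‖pdx (fun q => f (sInv q.1, tInv q.2)) q‖ = 1 ∧
        ‖pdy (fun q => f (sInv q.1, tInv q.2)) q‖ = 1) := by
  obtain ⟨hfC, hfreg, hNweak, hfront⟩ := h
  obtain ⟨hNC, hNunit, hNreg, hfun, hhval⟩ := hNweak
  have hD : IsOpen (I ×ˢ J) := hI.prod hJ
  -- norms of f-partials equal norms of N-partials
  have hnormx : ∀ p ∈ I ×ˢ J, ‖pdx f p‖ = ‖pdx N p‖ := by
    intro p hp
    rw [(hfront p hp).1]
    exact norm_cross3 (hNunit p hp) (ortho_pdx hI hJ hNC.1 hNunit hp)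
  have hnormy : ∀ p ∈ I ×ˢ J, ‖pdy f p‖ = ‖pdy N p‖ := by
    intro p hp
    rw [(hfront p hp).2, norm_neg]
    exact norm_cross3 (hNunit p hp) (ortho_pdy hI hJ hNC.1 hNunit hp)
  -- norm constancy
  have hconstx : ∀ x ∈ I, ∀ y ∈ J, ‖pdx f (x, y)‖ = ‖pdx f (x, y₀)‖ := by
    intro x hx y hy
    rw [hnormx _ ⟨hx, hy⟩, hnormx _ ⟨hx, hy₀⟩]
    exact normNx_const hI hJ hJc hNC hNunit (fun p hp => (hhval p hp).1) hx hy hy₀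
  have hconsty : ∀ y ∈ J, ∀ x ∈ I, ‖pdy f (x, y)‖ = ‖pdy f (x₀, y)‖ := by
    intro y hy x hx
    rw [hnormy _ ⟨hx, hy⟩, hnormy _ ⟨hx₀, hy⟩]
    exact normNy_const hI hJ hIc hNC hNunit (fun p hp => (hhval p hp).2) hy hx hx₀
  -- speed functions
  set c1 : ℝ → ℝ := fun x => ‖pdx f (x, y₀)‖ with hc1def
  set c2 : ℝ → ℝ := fun y => ‖pdy f (x₀, y)‖ with hc2def
  have hc1cont : ContinuousOn c1 I := by
    apply ContinuousOn.norm
    exact (continuousOn_pdx hD hfC.1).comp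
      ((continuous_id.prodMk continuous_const).continuousOn) (fun x hx => ⟨hx, hy₀⟩)
  have hc2cont : ContinuousOn c2 J := by
    apply ContinuousOn.norm
    exact (continuousOn_pdy hD hfC.1).comp
      ((continuous_const.prodMk continuous_id).continuousOn) (fun y hy => ⟨hx₀, hy⟩)
  have hc1pos : ∀ x ∈ I, 0 < c1 x := fun x hx => norm_pos_iff.mpr (hfreg _ ⟨hx, hy₀⟩).1
  have hc2pos : ∀ y ∈ J, 0 < c2 y := fun y hy => norm_pos_iff.mpr (hfreg _ ⟨hx₀, hy⟩).2
  have hsderiv : ∀ x ∈ I, HasDerivAt s (c1 x) x := ftc_pack hI hIc hc1cont hx₀ hs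
  have htderiv : ∀ y ∈ J, HasDerivAt t (c2 y) y := ftc_pack hJ hJc hc2cont hy₀ ht
  have hsC : ContDiffOn ℝ 1 s I := by
    rw [show (1 : WithTop ℕ∞) = 0 + 1 by rfl, contDiffOn_succ_iff_deriv_of_isOpen hI]
    refine ⟨fun x hx => ((hsderiv x hx).differentiableAt).differentiableWithinAt, by simp, ?_⟩
    rw [contDiffOn_zero]
    exact hc1cont.congr fun x hx => (hsderiv x hx).deriv
  have htC : ContDiffOn ℝ 1 t J := by
    rw [show (1 : WithTop ℕ∞) = 0 + 1 by rfl, contDiffOn_succ_iff_deriv_of_isOpen hJ]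
    refine ⟨fun y hy => ((htderiv y hy).differentiableAt).differentiableWithinAt, by simp, ?_⟩
    rw [contDiffOn_zero]
    exact hc2cont.congr fun y hy => (htderiv y hy).deriv
  refine ⟨fun x hx => ⟨hsderiv x hx, hc1pos x hx⟩, fun y hy => ⟨htderiv y hy, hc2pos y hy⟩,
    hsC, htC, ?_⟩
  obtain ⟨sInv, hI'open, hI'ord, hsbij, hsleft, hsinv, hacont, hsInvC⟩ :=
    inverse_pack hI hIc hsderiv hc1cont hc1pos
  obtain ⟨tInv, hJ'open, hJ'ord, htbij, htleft, htinv, hbcont, htInvC⟩ :=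
    inverse_pack hJ hJc htderiv hc2cont hc2pos
  refine ⟨s '' I, t '' J, sInv, tInv, hI'open, hJ'open, hI'ord, hJ'ord, hsbij, htbij,
    hsleft, htleft, hsInvC, htInvC, ?_, ?_⟩
  all_goals {
    have hu : ∀ σ ∈ s '' I, HasDerivAt sInv ((c1 (sInv σ))⁻¹) σ := fun σ hσ => (hsinv σ hσ).2
    have hv : ∀ τ ∈ t '' J, HasDerivAt tInv ((c2 (tInv τ))⁻¹) τ := fun τ hτ => (htinv τ hτ).2
    have hmaps : ∀ q : ℝ × ℝ, q ∈ (s '' I) ×ˢ (t '' J) → (sInv q.1, tInv q.2) ∈ I ×ˢ J :=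
      fun q hq => ⟨(hsinv _ hq.1).1, (htinv _ hq.2).1⟩
    have hane : ∀ σ ∈ s '' I, (c1 (sInv σ))⁻¹ ≠ 0 :=
      fun σ hσ => inv_ne_zero (hc1pos _ (hsinv σ hσ).1).ne'
    have hbne : ∀ τ ∈ t '' J, (c2 (tInv τ))⁻¹ ≠ 0 :=
      fun τ hτ => inv_ne_zero (hc2pos _ (htinv τ hτ).1).ne'
    have hrepF := reparam_all hI'open hJ'open hD hu hv hacont hbcont hsInvC htInvC hmaps hfC
    have hrepN := reparam_all hI'open hJ'open hD hu hv hacont hbcont hsInvC htInvC hmaps hNC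
    first
    | -- PsFront goal
      ( refine ⟨hrepF.1, ?_, ⟨hrepN.1, fun q hq => hNunit _ (hmaps q hq), ?_,
          ⟨fun q => ((c1 (sInv q.1))⁻¹ * (c2 (tInv q.2))⁻¹) * hfun (sInv q.1, tInv q.2), ?_⟩⟩, ?_⟩
        · intro q hq
          obtain ⟨h1, h2, _, _⟩ := hrepF.2 q hq
          exact ⟨h1 ▸ smul_ne_zero (hane _ hq.1) (hfreg _ (hmaps q hq)).1,
            h2 ▸ smul_ne_zero (hbne _ hq.2) (hfreg _ (hmaps q hq)).2⟩
        · intro q hq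
          obtain ⟨h1, h2, _, _⟩ := hrepN.2 q hq
          exact ⟨h1 ▸ smul_ne_zero (hane _ hq.1) (hNreg _ (hmaps q hq)).1,
            h2 ▸ smul_ne_zero (hbne _ hq.2) (hNreg _ (hmaps q hq)).2⟩
        · intro q hq
          obtain ⟨_, _, h3, h4⟩ := hrepN.2 q hq
          constructor
          · rw [h3, (hhval _ (hmaps q hq)).1, smul_smul]
          · rw [h4, (hhval _ (hmaps q hq)).2, smul_smul]
        · intro q hq
          obtain ⟨h1, h2, _, _⟩ := hrepF.2 q hq
          obtain ⟨h1N, h2N, _, _⟩ := hrepN.2 q hq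
          constructor
          · rw [h1, (hfront _ (hmaps q hq)).1, h1N, cross3_smul_right]
          · rw [h2, (hfront _ (hmaps q hq)).2, h2N, cross3_smul_right, smul_neg]
      )
    | -- unit norm goal
      ( intro q hq
        obtain ⟨h1, h2, _, _⟩ := hrepF.2 q hq
        have hx1 : sInv q.1 ∈ I := (hsinv _ hq.1).1
        have hy1 : tInv q.2 ∈ J := (htinv _ hq.2).1
        constructor
        · rw [h1, norm_smul, Real.norm_eq_abs,
            abs_of_pos (inv_pos.mpr (hc1pos _ hx1)),
            hconstx _ hx1 _ hy1]
          exact inv_mul_cancel₀ (hc1pos _ hx1).ne'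
        · rw [h2, norm_smul, Real.norm_eq_abs,
            abs_of_pos (inv_pos.mpr (hc2pos _ hy1)),
            hconsty _ hy1 _ hx1]
          exact inv_mul_cancel₀ (hc2pos _ hy1).ne'
      )
  }

end
end

section
/- Let f : D → ℝ³ be a weakly-regular C^{1M} Chebyshev ps-front (‖f_x‖ ≡ ‖f_y‖ ≡ 1) with weakly harmonic map N. Set F = ⟨f_x,f_y⟩ and m = −⟨f_x,N_y⟩. Then m² = 1 − F² at every point of D. Consequently, at every point p where f_x(p) and f_y(p) are linearly independent (equivalently F(p)² ≠ 1), the Gauss curvature K(p) := (ℓn − m²)/(EG − F²), with ℓ = −⟨f_x,N_x⟩ = 0, n = −⟨f_y,N_y⟩ = 0, E = G = 1, equals −1. -/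
noncomputable section

open Real Set

/-- Coordinate expression of the Euclidean inner product. -/
lemma inner3_eq (a b : E3) : (inner ℝ a b : ℝ) = a 0 * b 0 + a 1 * b 1 + a 2 * b 2 := by
  simp [PiLp.inner_apply, RCLike.inner_apply, Fin.sum_univ_three]; ring

lemma dot_eq (a b : E3) : dot a b = a 0 * b 0 + a 1 * b 1 + a 2 * b 2 := inner3_eq a b

lemma cross3_apply0 (a b : E3) : cross3 a b 0 = a 1 * b 2 - a 2 * b 1 := by simp [cross3]
lemma cross3_apply1 (a b : E3) : cross3 a b 1 = a 2 * b 0 - a 0 * b 2 := by simp [cross3]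
lemma cross3_apply2 (a b : E3) : cross3 a b 2 = a 0 * b 1 - a 1 * b 0 := by simp [cross3]

lemma dot_neg_right (a b : E3) : dot a (-b) = -dot a b := by simp [dot, inner_neg_right]
lemma dot_neg_left (a b : E3) : dot (-a) b = -dot a b := by simp [dot, inner_neg_left]

/-- The key algebraic (Gram/Lagrange) identity in coordinates. -/
lemma key_alg (a0 a1 a2 b0 b1 b2 c0 c1 c2 : ℝ)
    (hA : a0^2+a1^2+a2^2 = 1)
    (hP : a0*b0+a1*b1+a2*b2 = 0)
    (hQ : a0*c0+a1*c1+a2*c2 = 0)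
    (hU : (a1*b2-a2*b1)^2+(a2*b0-a0*b2)^2+(a0*b1-a1*b0)^2 = 1)
    (hV : (a1*c2-a2*c1)^2+(a2*c0-a0*c2)^2+(a0*c1-a1*c0)^2 = 1) :
    ((a1*b2-a2*b1)*c0+(a2*b0-a0*b2)*c1+(a0*b1-a1*b0)*c2)^2
    = 1 - ((a1*b2-a2*b1)*(a1*c2-a2*c1)+(a2*b0-a0*b2)*(a2*c0-a0*c2)+(a0*b1-a1*b0)*(a0*c1-a1*c0))^2 := by
  have hB : b0^2+b1^2+b2^2 = 1 := by
    linear_combination hU + (a0*b0+a1*b1+a2*b2) * hP - (b0^2+b1^2+b2^2) * hA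
  have hC : c0^2+c1^2+c2^2 = 1 := by
    linear_combination hV + (a0*c0+a1*c1+a2*c2) * hQ - (c0^2+c1^2+c2^2) * hA
  linear_combination
    ((b0^2+b1^2+b2^2)*(c0^2+c1^2+c2^2) + (a0^2+a1^2+a2^2)*(b0*c0+b1*c1+b2*c2)^2) * hA
    + (c0^2+c1^2+c2^2) * hB + hC
    + (2*(a0*c0+a1*c1+a2*c2)*(b0*c0+b1*c1+b2*c2) - (c0^2+c1^2+c2^2)*(a0*b0+a1*b1+a2*b2)
        - 2*(a0^2+a1^2+a2^2)*(a0*c0+a1*c1+a2*c2)*(b0*c0+b1*c1+b2*c2)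
        + (a0*b0+a1*b1+a2*b2)*(a0*c0+a1*c1+a2*c2)^2) * hP
    + (-(b0^2+b1^2+b2^2)*(a0*c0+a1*c1+a2*c2)) * hQ

/-- A unit-sphere-valued `C¹` map is orthogonal to its directional derivatives. -/
lemma perp_lineDeriv {D : Set (ℝ × ℝ)} (hD : IsOpen D) {N : ℝ × ℝ → E3}
    (hN : ContDiffOn ℝ 1 N D) (hu : ∀ q ∈ D, ‖N q‖ = 1) {p : ℝ × ℝ} (hp : p ∈ D)
    (v : ℝ × ℝ) : inner ℝ (N p) (lineDeriv ℝ N p v) = (0 : ℝ) := by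
  have hd : DifferentiableAt ℝ N p :=
    (hN.contDiffAt (hD.mem_nhds hp)).differentiableAt one_ne_zero
  have h1 : HasFDerivAt N (fderiv ℝ N p) p := hd.hasFDerivAt
  have h2 := h1.inner ℝ h1
  have hev : (fun q => (inner ℝ (N q) (N q) : ℝ)) =ᶠ[nhds p] fun _ => 1 := by
    filter_upwards [hD.mem_nhds hp] with q hq
    rw [real_inner_self_eq_norm_sq, hu q hq]; norm_num
  have h3 := h2.congr_of_eventuallyEq hev.symm
  have h4 := h3.unique (hasFDerivAt_const (1 : ℝ) p)
  have h5 := congrArg (fun L => L v) h4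
  simp [fderivInnerCLM_apply] at h5
  have h6 : (inner ℝ (N p) (fderiv ℝ N p v) : ℝ) = ∑ x : Fin 3, N p x * (fderiv ℝ N p) v x := by
    simp [PiLp.inner_apply, RCLike.inner_apply, mul_comm]
  have h7 : ∑ x : Fin 3, (fderiv ℝ N p) v x * N p x = ∑ x : Fin 3, N p x * (fderiv ℝ N p) v x := by
    simp [mul_comm]
  rw [hd.lineDeriv_eq_fderiv, h6]
  linarith [h5, h7, real_inner_comm (N p) (fderiv ℝ N p v)]

/-- For a weakly-regular C^{1M} Chebyshev ps-front, with `F = ⟨f_x,f_y⟩` and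
`m = −⟨f_x,N_y⟩`, one has `m² = 1 − F²`; hence at every point where `f_x`, `f_y` are
linearly independent, the Gauss curvature
`K = (ℓn − m²)/(EG − F²)` (with `ℓ = −⟨f_x,N_x⟩ = 0`, `n = −⟨f_y,N_y⟩ = 0`,
`E = G = 1`) equals `−1`. -/
theorem stmt_7 (D : Set (ℝ × ℝ)) (hD : IsOpen D)
    (f N : ℝ × ℝ → E3) (h : PsFront D f N)
    (hE : ∀ p ∈ D, ‖pdx f p‖ = 1) (hG : ∀ p ∈ D, ‖pdy f p‖ = 1) :
    ∀ p ∈ D,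
      (-dot (pdx f p) (pdy N p)) ^ 2 = 1 - dot (pdx f p) (pdy f p) ^ 2 ∧
      (LinearIndependent ℝ ![pdx f p, pdy f p] →
        dot (pdx f p) (pdy f p) ^ 2 ≠ 1 ∧
        dot (pdx f p) (pdx N p) = 0 ∧
        dot (pdy f p) (pdy N p) = 0 ∧
        ((-dot (pdx f p) (pdx N p)) * (-dot (pdy f p) (pdy N p)) -
            (-dot (pdx f p) (pdy N p)) ^ 2) /
          (1 * 1 - dot (pdx f p) (pdy f p) ^ 2) = -1) := by
  intro p hp
  obtain ⟨hf1M, hfreg, hNh, hstruct⟩ := h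
  obtain ⟨hN1M, hNunit, hNreg, _⟩ := hNh
  obtain ⟨hfx, hfy⟩ := hstruct p hp
  set a : E3 := N p with ha
  set b : E3 := pdx N p with hb
  set c : E3 := pdy N p with hc
  -- basic scalar facts
  have hA : a 0 ^ 2 + a 1 ^ 2 + a 2 ^ 2 = 1 := by
    have hna : ‖a‖ = 1 := by rw [ha]; exact hNunit p hp
    have h1 := real_inner_self_eq_norm_sq a
    rw [hna, inner3_eq] at h1
    linear_combination h1
  have hP : a 0 * b 0 + a 1 * b 1 + a 2 * b 2 = 0 := by
    have := perp_lineDeriv hD hN1M.1 hNunit hp ((1 : ℝ), (0 : ℝ))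
    rw [← inner3_eq a b]; exact this
  have hQ : a 0 * c 0 + a 1 * c 1 + a 2 * c 2 = 0 := by
    have := perp_lineDeriv hD hN1M.1 hNunit hp ((0 : ℝ), (1 : ℝ))
    rw [← inner3_eq a c]; exact this
  have hU : (a 1*b 2-a 2*b 1)^2+(a 2*b 0-a 0*b 2)^2+(a 0*b 1-a 1*b 0)^2 = 1 := by
    have h1 := real_inner_self_eq_norm_sq (pdx f p)
    rw [hE p hp] at h1
    rw [hfx] at h1
    rw [inner3_eq, cross3_apply0, cross3_apply1, cross3_apply2] at h1
    linear_combination h1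
  have hV : (a 1*c 2-a 2*c 1)^2+(a 2*c 0-a 0*c 2)^2+(a 0*c 1-a 1*c 0)^2 = 1 := by
    have h1 := real_inner_self_eq_norm_sq (pdy f p)
    rw [hG p hp] at h1
    rw [hfy, inner_neg_neg, inner3_eq, cross3_apply0, cross3_apply1, cross3_apply2] at h1
    linear_combination h1
  have hkey := key_alg (a 0) (a 1) (a 2) (b 0) (b 1) (b 2) (c 0) (c 1) (c 2) hA hP hQ hU hV
  -- coordinate expressions of the dot products appearing in the goal
  have hm : dot (pdx f p) (pdy N p)
      = (a 1*b 2-a 2*b 1)*c 0+(a 2*b 0-a 0*b 2)*c 1+(a 0*b 1-a 1*b 0)*c 2 := by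
    rw [hfx, dot_eq, cross3_apply0, cross3_apply1, cross3_apply2]
  have hF : dot (pdx f p) (pdy f p)
      = -(((a 1*b 2-a 2*b 1)*(a 1*c 2-a 2*c 1)+(a 2*b 0-a 0*b 2)*(a 2*c 0-a 0*c 2)
          +(a 0*b 1-a 1*b 0)*(a 0*c 1-a 1*c 0))) := by
    rw [hfx, hfy, dot_neg_right, dot_eq]
    simp only [cross3_apply0, cross3_apply1, cross3_apply2]
  have hl : dot (pdx f p) (pdx N p) = 0 := by
    rw [hfx, dot_eq, cross3_apply0, cross3_apply1, cross3_apply2]; ring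
  have hn : dot (pdy f p) (pdy N p) = 0 := by
    rw [hfy, dot_neg_left, dot_eq, cross3_apply0, cross3_apply1, cross3_apply2]; ring
  have hmain : (-dot (pdx f p) (pdy N p)) ^ 2 = 1 - dot (pdx f p) (pdy f p) ^ 2 := by
    rw [hm, hF]; linear_combination hkey
  refine ⟨hmain, fun hli => ?_⟩
  rw [linearIndependent_fin2] at hli
  obtain ⟨hy0, hax⟩ := hli
  simp only [Matrix.cons_val_one, Matrix.head_cons, Matrix.cons_val_zero] at hy0 hax
  have hF2 : dot (pdx f p) (pdy f p) ^ 2 ≠ 1 := by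
    intro hF1
    have hfac : (dot (pdx f p) (pdy f p) - 1) * (dot (pdx f p) (pdy f p) + 1) = 0 := by
      linear_combination hF1
    rcases mul_eq_zero.mp hfac with h' | h'
    · have h1 : (inner ℝ (pdx f p) (pdy f p) : ℝ) = 1 := by
        have : dot (pdx f p) (pdy f p) = 1 := by linarith
        simpa [dot] using this
      have := (inner_eq_one_iff_of_norm_eq_one (𝕜 := ℝ) (hE p hp) (hG p hp)).mp h1
      exact hax 1 (by rw [one_smul, this])
    · have h1 : (inner ℝ (pdx f p) (-(pdy f p)) : ℝ) = 1 := by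
        rw [inner_neg_right]
        have : dot (pdx f p) (pdy f p) = -1 := by linarith
        simp only [dot] at this
        rw [this]; norm_num
      have hny : ‖-(pdy f p)‖ = 1 := by rw [norm_neg]; exact hG p hp
      have := (inner_eq_one_iff_of_norm_eq_one (𝕜 := ℝ) (hE p hp) hny).mp h1
      exact hax (-1) (by rw [neg_one_smul, ← this])
  refine ⟨hF2, hl, hn, ?_⟩
  have hne : 1 * 1 - dot (pdx f p) (pdy f p) ^ 2 ≠ 0 := by
    intro h0; apply hF2; linarith
  rw [hl, hn, hmain, div_eq_iff hne]
  ring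
end
end
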